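/- Let p ≥ 2 be an integer and c ∈ ℂ with |c| ≤ 2^(1/(p−1)). Suppose there exists an integer n ≥ 1 and δ > 0 such that |Q_{p,c}^n(0)| = 2^(1/(p−1)) + δ. Then for every natural number m ≥ 1, |Q_{p,c}^{n+m}(0)| ≥ 2^(1/(p−1)) + (2p)^m·δ. -/

import Mathlib

theorem multibrot_escape_after_exceeding (p : ℕ) (hp : 2 ≤ p) (c : ℂ)
    (hc : ‖c‖ ≤ (2 : ℝ) ^ ((1 : ℝ) / ((p : ℝ) - 1)))
    (n : ℕ) (hn : 1 ≤ n) (δ : ℝ) (hδ : 0 < δ)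
    (hQn : ‖(fun z : ℂ => z ^ p + c)^[n] 0‖ =
      (2 : ℝ) ^ ((1 : ℝ) / ((p : ℝ) - 1)) + δ) :
    ∀ m : ℕ, 1 ≤ m →
      (2 : ℝ) ^ ((1 : ℝ) / ((p : ℝ) - 1)) + (2 * (p : ℝ)) ^ m * δ ≤
        ‖(fun z : ℂ => z ^ p + c)^[n + m] 0‖ := by
  set r : ℝ := (2 : ℝ) ^ ((1 : ℝ) / ((p : ℝ) - 1)) with hrdef
  have hp2 : (2 : ℝ) ≤ (p : ℝ) := by exact_mod_cast hp
  have hr1 : 1 ≤ r := Real.one_le_rpow one_le_two (div_nonneg zero_le_one (by linarith))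
  have hr0 : 0 < r := lt_of_lt_of_le one_pos hr1
  have hrp1 : r ^ (p - 1) = 2 := by
    rw [hrdef, ← Real.rpow_natCast _ (p - 1), ← Real.rpow_mul (by norm_num)]
    have hc1 : ((p - 1 : ℕ) : ℝ) = (p : ℝ) - 1 := by
      push_cast [Nat.cast_sub (by omega : 1 ≤ p)]; ring
    rw [hc1]
    rw [one_div, inv_mul_cancel₀ (by linarith), Real.rpow_one]
  have hrp : r ^ p = 2 * r := by
    have hpe : p = (p - 1) + 1 := by omega
    rw [hpe, pow_succ, hrp1]
  have key : ∀ z : ℂ, ∀ ε : ℝ, 0 ≤ ε → r + ε ≤ ‖z‖ →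
      r + 2 * (p : ℝ) * ε ≤ ‖z ^ p + c‖ := by
    intro z ε hε hz
    have h1 : (r + ε) ^ p ≤ (‖z‖) ^ p :=
      pow_le_pow_left₀ (by positivity) hz p
    have hb : 1 + (p : ℝ) * (ε / r) ≤ (1 + ε / r) ^ p :=
      one_add_mul_le_pow (by have := div_nonneg hε hr0.le; linarith) p
    have hpow : r ^ p = r ^ (p - 1) * r := by
      rw [← pow_succ]; congr 1; omega
    have e1 : r ^ p * (1 + (p : ℝ) * (ε / r)) = r ^ p + (p : ℝ) * r ^ (p - 1) * ε := by
      rw [hpow]; field_simp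
    have heq : (r + ε) = r * (1 + ε / r) := by field_simp
    have h2 : r ^ p + (p : ℝ) * r ^ (p - 1) * ε ≤ (r + ε) ^ p := by
      calc r ^ p + (p : ℝ) * r ^ (p - 1) * ε = r ^ p * (1 + (p : ℝ) * (ε / r)) := e1.symm
        _ ≤ r ^ p * (1 + ε / r) ^ p := by
            exact mul_le_mul_of_nonneg_left hb (by positivity)
        _ = (r + ε) ^ p := by rw [← mul_pow, ← heq]
    have h3 : ‖z ^ p‖ - ‖c‖ ≤ ‖z ^ p + c‖ := by
      have h := norm_add_le (z ^ p + c) (-c)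
      simp only [add_neg_cancel_right, norm_neg] at h
      linarith
    rw [norm_pow] at h3
    have : r + 2 * (p : ℝ) * ε ≤ (r + ε) ^ p - r := by
      have : r ^ p + (p : ℝ) * r ^ (p - 1) * ε = 2 * r + 2 * (p : ℝ) * ε := by
        rw [hrp, hrp1]; ring
      linarith [h2]
    linarith [h1, h3, hc]
  have main : ∀ m : ℕ,
      r + (2 * (p : ℝ)) ^ m * δ ≤ ‖(fun z : ℂ => z ^ p + c)^[n + m] 0‖ := by
    intro m
    induction m with
    | zero => simpa using hQn.ge
    | succ m ih =>
        have hstep : n + (m + 1) = (n + m) + 1 := by omega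
        rw [hstep, Function.iterate_succ_apply']
        have hk := key ((fun z : ℂ => z ^ p + c)^[n + m] 0) ((2 * (p : ℝ)) ^ m * δ)
          (by positivity) ih
        have : (2 * (p : ℝ)) ^ (m + 1) * δ = 2 * (p : ℝ) * ((2 * (p : ℝ)) ^ m * δ) := by
          ring
        rw [this]
        exact hk
  intro m _
  exact main m
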